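/- Fix a ≠ 0, b ∈ ℝ, and θ ∈ ℝ, and define M(y) := (a²/(a² + (y−b)²))^{1/2} for y ∈ ℝ. Then sup_{y∈ℝ} (y − θ)² · M(y)² ≤ a² + (θ − b)². -/
import Mathlib


/-- The weighting function `M(y) = (a²/(a²+(y−b)²))^{1/2}` satisfies
`(y−θ)²·M(y)² ≤ a² + (θ−b)²` for all `y`, establishing the bias-robustness
precondition for the normal location model. -/
theorem weighting_function_bound
    (a b θ : ℝ) (ha : a ≠ 0) :
    ∀ y : ℝ,
      (y - θ) ^ 2 * (Real.sqrt (a ^ 2 / (a ^ 2 + (y - b) ^ 2))) ^ 2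
        ≤ a ^ 2 + (θ - b) ^ 2 := by
  intro y
  have hden : 0 < a ^ 2 + (y - b) ^ 2 := by positivity
  rw [Real.sq_sqrt (by positivity)]
  rw [← mul_div_assoc, div_le_iff₀ hden]
  nlinarith [sq_nonneg (a ^ 2 + (y - b) * (θ - b))]
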